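/- Let s be as in the context (any of the four cases). For every α ∈ Δ_Z and every η ∈ Δ^O, the vector α + η is not a root: α + η ∉ Δ. -/

import Mathlib

/- Common framework: type A_l root system realized in ℝ^{ℕ} (coordinates 1,…,l+1 used),
   the Weyl group as permutations of ℕ acting by permuting coordinates, and the
   Weyl group element s = s₁s₂ of Proposition 4.2 (all four parity cases). -/

noncomputable section

namespace DPW

/-- The ambient vector space (only coordinates 1,…,l+1 are used). -/
abbrev V : Type := ℕ → ℝ

/-- Standard basis vector e_i. -/
def evec (i : ℕ) : V := fun j => if j = i then 1 else 0

/-- The root e_i − e_j. -/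
def rt (i j : ℕ) : V := evec i - evec j

/-- The root system Δ of type A_l. -/
def Delta (l : ℕ) : Set V :=
  {v | ∃ i j, 1 ≤ i ∧ i ≤ l + 1 ∧ 1 ≤ j ∧ j ≤ l + 1 ∧ i ≠ j ∧ v = rt i j}

/-- Positive roots Δ₊. -/
def DeltaPos (l : ℕ) : Set V :=
  {v | ∃ i j, 1 ≤ i ∧ i < j ∧ j ≤ l + 1 ∧ v = rt i j}

/-- Negative roots Δ₋ = −Δ₊. -/
def DeltaNeg (l : ℕ) : Set V := {v | -v ∈ DeltaPos l}

/-- Action of a permutation on V : (σ·v)_j = v_{σ⁻¹(j)}. -/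
def pact (σ : Equiv.Perm ℕ) (v : V) : V := fun j => v (σ⁻¹ j)

/-- row(e_a − e_b) = a. -/
def rowOf (v : V) : ℕ := sInf {a | v a = 1}

/-- col(e_a − e_b) = b. -/
def colOf (v : V) : ℕ := sInf {b | v b = (-1 : ℝ)}

/-- Product of the simple reflections s_{α_i} = (i, i+1) for i in a list. -/
def swapProd (idxs : List ℕ) : Equiv.Perm ℕ :=
  (idxs.map (fun i => Equiv.swap i (i + 1))).prod

/-- The Weyl group element s = s₁s₂ (cases (i)–(iv) according to the parities of
    m = ⌊(l′−1)/2⌋ and l′; here p = l − l′ and s_γ = (m+1, m+p+2)). -/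
def weylS (l l' : ℕ) : Equiv.Perm ℕ :=
  let m := (l' - 1) / 2
  let p := l - l'
  if m % 2 = 0 then
    if l' % 2 = 1 then
      -- case (i)
      (swapProd (List.range' 2 (m / 2) 2) * swapProd (List.range' (m + p + 2) (m / 2) 2)) *
        (swapProd (List.range' 1 (m / 2) 2) * Equiv.swap (m + 1) (m + p + 2) *
          swapProd (List.range' (m + p + 3) (m / 2) 2))
    else
      -- case (ii)
      (swapProd (List.range' 2 (m / 2) 2) * swapProd (List.range' (m + p + 2) (m / 2 + 1) 2)) *
        (swapProd (List.range' 1 (m / 2) 2) * Equiv.swap (m + 1) (m + p + 2) *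
          swapProd (List.range' (m + p + 3) (m / 2) 2))
  else
    if l' % 2 = 1 then
      -- case (iii)
      (swapProd (List.range' 1 ((m + 1) / 2) 2) *
          swapProd (List.range' (m + p + 2) ((m + 1) / 2) 2)) *
        (swapProd (List.range' 2 ((m - 1) / 2) 2) * Equiv.swap (m + 1) (m + p + 2) *
          swapProd (List.range' (m + p + 3) ((m - 1) / 2) 2))
    else
      -- case (iv)
      (swapProd (List.range' 1 ((m + 1) / 2) 2) *
          swapProd (List.range' (m + p + 2) ((m + 1) / 2) 2)) *
        (swapProd (List.range' 2 ((m - 1) / 2) 2) * Equiv.swap (m + 1) (m + p + 2) *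
          swapProd (List.range' (m + p + 3) ((m + 1) / 2) 2))

/-- Δ_s = {α ∈ Δ₊ : sα ∈ Δ₋}. -/
def DeltaS (l : ℕ) (s : Equiv.Perm ℕ) : Set V :=
  {v ∈ DeltaPos l | pact s v ∈ DeltaNeg l}

/-- Δ_{s⁻¹} = {α ∈ Δ₊ : s⁻¹α ∈ Δ₋}. -/
def DeltaSinv (l : ℕ) (s : Equiv.Perm ℕ) : Set V :=
  {v ∈ DeltaPos l | pact s⁻¹ v ∈ DeltaNeg l}

/-- (Δ̄_K)₊ = {α ∈ Δ₊ : sα ≠ α}. -/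
def DeltaKpos (l : ℕ) (s : Equiv.Perm ℕ) : Set V :=
  {v ∈ DeltaPos l | pact s v ≠ v}

/-- (Δ̄_K)₋ = −(Δ̄_K)₊. -/
def DeltaKneg (l : ℕ) (s : Equiv.Perm ℕ) : Set V := {v | -v ∈ DeltaKpos l s}

/-- Δ^C = {α ∈ (Δ̄_K)₊ : row(sα) = row(α)}. -/
def DeltaC (l : ℕ) (s : Equiv.Perm ℕ) : Set V :=
  {v ∈ DeltaKpos l s | rowOf (pact s v) = rowOf v}

/-- Δ^R = {α ∈ (Δ̄_K)₊ : col(sα) = col(α)}. -/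
def DeltaR (l : ℕ) (s : Equiv.Perm ℕ) : Set V :=
  {v ∈ DeltaKpos l s | colOf (pact s v) = colOf v}

/-- Δ^O = (Δ̄_K)₊ \ (Δ^C ∪ Δ^R). -/
def DeltaO (l : ℕ) (s : Equiv.Perm ℕ) : Set V :=
  DeltaKpos l s \ (DeltaC l s ∪ DeltaR l s)

/-- Δ₁^O = {α ∈ Δ^O : row(α) ≥ m+p+2}. -/
def DeltaO1 (l : ℕ) (s : Equiv.Perm ℕ) (m p : ℕ) : Set V :=
  {v ∈ DeltaO l s | m + p + 2 ≤ rowOf v}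

/-- Δ₂^O = {α ∈ Δ^O : col(α) ≤ m+1}. -/
def DeltaO2 (l : ℕ) (s : Equiv.Perm ℕ) (m : ℕ) : Set V :=
  {v ∈ DeltaO l s | colOf v ≤ m + 1}

/-- Δ₃^O = Δ^O \ (Δ₁^O ∪ Δ₂^O). -/
def DeltaO3 (l : ℕ) (s : Equiv.Perm ℕ) (m p : ℕ) : Set V :=
  DeltaO l s \ (DeltaO1 l s m p ∪ DeltaO2 l s m)

/-- Δ̄_K^k = {α ∈ (Δ̄_K)₊ : s^{−j}α ∈ (Δ̄_K)₊ for 1 ≤ j ≤ k−1 and s^{−k}α ∈ (Δ̄_K)₋}. -/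
def DeltaKk (l : ℕ) (s : Equiv.Perm ℕ) (k : ℕ) : Set V :=
  {v ∈ DeltaKpos l s |
    (∀ j, 1 ≤ j → j ≤ k - 1 → pact (s⁻¹ ^ j) v ∈ DeltaKpos l s) ∧
      pact (s⁻¹ ^ k) v ∈ DeltaKneg l s}

/-- d(α) = min{k ≥ 1 : s^{−k}α ∈ Δ₋}. -/
def dd (l : ℕ) (s : Equiv.Perm ℕ) (v : V) : ℕ :=
  sInf {k | 1 ≤ k ∧ pact (s⁻¹ ^ k) v ∈ DeltaNeg l}

/-- Δ_Z = {e_i − e_j : m+2 ≤ i, j ≤ m+p+1, i ≠ j}. -/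
def DeltaZ (m p : ℕ) : Set V :=
  {v | ∃ i j, m + 2 ≤ i ∧ i ≤ m + p + 1 ∧ m + 2 ≤ j ∧ j ≤ m + p + 1 ∧ i ≠ j ∧ v = rt i j}

/-- The ⟨s⟩-orbit of a vector. -/
def orbitOf (s : Equiv.Perm ℕ) (v : V) : Set V := {w | ∃ n : ℤ, w = pact (s ^ n) v}

/-- The set P_κ (for κ ∈ Δ̄_K^k). -/
def Pk (l : ℕ) (s : Equiv.Perm ℕ) (k : ℕ) (κ : V) : Set (V × V) :=
  {q | (∃ i, 2 ≤ i ∧ i ≤ k - 1 ∧ q.1 ∈ DeltaKk l s i) ∧ q.2 ∈ DeltaKk l s k ∧ κ = q.1 + q.2}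

/-- The set P′_κ (for κ ∈ Δ̄_K^k). -/
def Pk' (l : ℕ) (s : Equiv.Perm ℕ) (k : ℕ) (κ : V) : Set (V × V) :=
  {q | q.1 ∈ DeltaKk l s k ∧ q.2 ∈ DeltaKk l s k ∧ κ = q.1 + q.2}

/-- The eigenvector v^λ of case (i) (m even, l′ = 2m+1 odd). -/
def vlam (m p : ℕ) (lam : ℂ) : ℕ → ℂ := fun j =>
  if j = 0 then 0
  else if j ≤ m + 1 then
    (if j % 2 = 1 then lam ^ ((4 * m + 5 - j) / 2) else lam ^ (j / 2))
  else if j ≤ m + p + 1 then 0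
  else if j ≤ m + p + m + 2 then
    (if (j - (m + p)) % 2 = 0 then lam ^ ((m + (j - (m + p))) / 2)
     else lam ^ ((3 * m + 5 - (j - (m + p))) / 2))
  else 0



lemma pact_rt (σ : Equiv.Perm ℕ) (a b : ℕ) : pact σ (rt a b) = rt (σ a) (σ b) := by
  funext k
  have h1 : (σ⁻¹ k = a) = (k = σ a) := by
    apply propext; constructor <;> intro h <;> subst h <;> simp
  have h2 : (σ⁻¹ k = b) = (k = σ b) := by
    apply propext; constructor <;> intro h <;> subst h <;> simp
  simp only [pact, rt, evec, Pi.sub_apply, h1, h2]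

lemma rowOf_rt {a b : ℕ} (h : a ≠ b) : rowOf (rt a b) = a := by
  have hs : {x | rt a b x = 1} = {a} := by
    ext x
    simp only [Set.mem_setOf_eq, Set.mem_singleton_iff, rt, evec, Pi.sub_apply]
    constructor
    · intro hx; split_ifs at hx <;> norm_num at hx; assumption
    · rintro rfl; rw [if_pos rfl, if_neg h]; norm_num
  rw [rowOf, hs, csInf_singleton]

lemma colOf_rt {a b : ℕ} (h : a ≠ b) : colOf (rt a b) = b := by
  have hs : {x | rt a b x = (-1:ℝ)} = {b} := by
    ext x
    simp only [Set.mem_setOf_eq, Set.mem_singleton_iff, rt, evec, Pi.sub_apply]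
    constructor
    · intro hx; split_ifs at hx <;> norm_num at hx; assumption
    · rintro rfl; rw [if_neg (Ne.symm h), if_pos rfl]; norm_num
  rw [colOf, hs, csInf_singleton]

lemma swapProd_fix {idxs : List ℕ} {x : ℕ} (h : ∀ i ∈ idxs, x ≠ i ∧ x ≠ i + 1) :
    swapProd idxs x = x := by
  induction idxs with
  | nil => simp [swapProd]
  | cons i rest ih =>
    have h1 := h i List.mem_cons_self
    have h2 : swapProd rest x = x := ih fun j hj => h j (List.mem_cons_of_mem _ hj)
    show ((Equiv.swap i (i+1)) * swapProd rest) x = x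
    rw [Equiv.Perm.mul_apply, h2]
    exact Equiv.swap_apply_of_ne_of_ne h1.1 h1.2

lemma swapProd_low {start q x : ℕ} (h : start + 2 * q ≤ x) :
    swapProd (List.range' start q 2) x = x := by
  apply swapProd_fix
  intro i hi
  rw [List.mem_range'] at hi
  obtain ⟨k, hk, rfl⟩ := hi
  omega

lemma swapProd_high {start q x : ℕ} (h : x < start) :
    swapProd (List.range' start q 2) x = x := by
  apply swapProd_fix
  intro i hi
  rw [List.mem_range'] at hi
  obtain ⟨k, hk, rfl⟩ := hi
  omega

lemma weylS_fix (l l' m p x : ℕ) (hm : m = (l' - 1) / 2) (hp : p = l - l')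
    (hx1 : m + 2 ≤ x) (hx2 : x ≤ m + p + 1) : weylS l l' x = x := by
  subst hm hp
  set m := (l' - 1) / 2 with hm
  set p := l - l' with hp
  have hswap : Equiv.swap (m + 1) (m + p + 2) x = x :=
    Equiv.swap_apply_of_ne_of_ne (by omega) (by omega)
  unfold weylS
  simp only [← hm, ← hp]
  have hA : swapProd (List.range' 1 (m / 2) 2) x = x := swapProd_low (by omega)
  have hB : swapProd (List.range' 2 (m / 2) 2) x = x := swapProd_low (by omega)
  have hC : swapProd (List.range' 1 ((m + 1) / 2) 2) x = x := swapProd_low (by omega)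
  have hD : swapProd (List.range' 2 ((m - 1) / 2) 2) x = x := swapProd_low (by omega)
  have hE : ∀ q, swapProd (List.range' (m + p + 2) q 2) x = x := fun q => swapProd_high (by omega)
  have hF : ∀ q, swapProd (List.range' (m + p + 3) q 2) x = x := fun q => swapProd_high (by omega)
  split_ifs <;>
    simp only [Equiv.Perm.mul_apply, hF, hswap, hA, hB, hC, hD, hE]


lemma rt_eq_one {x y k : ℕ} (h : rt x y k = 1) : k = x := by
  simp only [rt, evec, Pi.sub_apply] at h
  split_ifs at h <;> norm_num at h; assumption

/-- for α ∈ Δ_Z and η ∈ Δ^O one has α + η ∉ Δ. -/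
theorem stmt10 (l l' m p : ℕ) (h5 : 5 ≤ l') (hll : l' ≤ l)
    (hm : m = (l' - 1) / 2) (hp : p = l - l') :
    ∀ α ∈ DeltaZ m p, ∀ η ∈ DeltaO l (weylS l l'), α + η ∉ Delta l := by
  intro α hα η hη hsum
  obtain ⟨i, j, hi2, hi1, hj2, hj1, hij, rfl⟩ := hα
  obtain ⟨hK, hnot⟩ := hη
  obtain ⟨hpos, hne⟩ := hK
  obtain ⟨a, b, ha1, hab, hbl, rfl⟩ := hpos
  have habne : a ≠ b := Nat.ne_of_lt hab
  set s := weylS l l' with hs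
  -- a is outside the middle block
  have hA : ¬ (m + 2 ≤ a ∧ a ≤ m + p + 1) := by
    rintro ⟨h1, h2⟩
    have hfa : s a = a := weylS_fix l l' m p a hm hp h1 h2
    have hsb : a ≠ s b := by
      intro h
      exact habne (s.injective (by rw [hfa, ← h]))
    refine hnot (Or.inl ⟨⟨⟨a, b, ha1, hab, hbl, rfl⟩, hne⟩, ?_⟩)
    rw [pact_rt, hfa, rowOf_rt hsb, rowOf_rt habne]
  have hB : ¬ (m + 2 ≤ b ∧ b ≤ m + p + 1) := by
    rintro ⟨h1, h2⟩
    have hfb : s b = b := weylS_fix l l' m p b hm hp h1 h2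
    have hsa : s a ≠ b := by
      intro h
      exact habne (s.injective (by rw [hfb, h]))
    refine hnot (Or.inr ⟨⟨⟨a, b, ha1, hab, hbl, rfl⟩, hne⟩, ?_⟩)
    rw [pact_rt, hfb, colOf_rt hsa, colOf_rt habne]
  -- disjointness
  have hia : i ≠ a := by omega
  have hib : i ≠ b := by omega
  have hja : j ≠ a := by omega
  have hjb : j ≠ b := by omega
  -- the sum has value 1 at both i and a
  obtain ⟨x, y, _, _, _, _, hxy, heq⟩ := hsum
  have e1 := congrFun heq i
  have e2 := congrFun heq a
  simp only [Pi.add_apply, rt, evec, Pi.sub_apply, if_pos rfl, if_neg hij, if_neg hia,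
    if_neg hib, if_neg (Ne.symm hia), if_neg (Ne.symm hja), if_neg habne] at e1 e2
  norm_num at e1 e2
  have hx1 : i = x := rt_eq_one (k := i) (x := x) (y := y) (by
    simp only [rt, evec, Pi.sub_apply]; rw [← e1])
  have hx2 : a = x := rt_eq_one (k := a) (x := x) (y := y) (by
    simp only [rt, evec, Pi.sub_apply]; rw [← e2])
  exact hia (hx1.trans hx2.symm)
end DPW
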